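/- There exists an absolute constant C > 0 such that for all real numbers u, v with 3 ≤ u ≤ v ≤ 2u and v − u ≥ 1, one has E|∑_{u < n ≤ v} f(n)|⁴ ≤ C · v^{2/3} (v − u)^{4/3} (log v)^{52/3}, where the sum runs over integers n in (u, v]. -/

import Mathlib

open MeasureTheory ProbabilityTheory Filter

/-- The uniform (Steinhaus) distribution on the complex unit circle, realized as the
pushforward of normalized Lebesgue measure on `(0, 2π]` under `θ ↦ exp(iθ)`. -/
noncomputable def steinhausMeasure : Measure ℂ :=
  Measure.map (fun θ : ℝ => Complex.exp (Complex.I * θ))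
    ((ENNReal.ofReal (2 * Real.pi))⁻¹ • volume.restrict (Set.Ioc 0 (2 * Real.pi)))

/-- `f : Ω → ℕ → ℂ` is a Steinhaus random multiplicative function w.r.t. `μ`:
each `f · n` is measurable, `f ω` is completely multiplicative (on positive integers),
the values at primes lie on the unit circle, are independent,
and each is uniformly distributed on the unit circle. -/
structure IsSteinhausRMF {Ω : Type*} [MeasurableSpace Ω] (μ : Measure Ω)
    (f : Ω → ℕ → ℂ) : Prop where
  meas : ∀ n : ℕ, Measurable fun ω => f ω n
  map_one : ∀ ω, f ω 1 = 1
  map_mul : ∀ ω, ∀ m n : ℕ, 0 < m → 0 < n → f ω (m * n) = f ω m * f ω n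
  norm_prime : ∀ ω, ∀ p : ℕ, p.Prime → ‖f ω p‖ = 1
  indep : iIndepFun (fun (p : {q : ℕ // q.Prime}) ω => f ω p.1) μ
  unif : ∀ p : ℕ, p.Prime → Measure.map (fun ω => f ω p) μ = steinhausMeasure

/-! ### Auxiliary lemmas: the Steinhaus measure -/

theorem SFMSI.steinhaus_integral (a b : ℕ) :
    ∫ z, z ^ a * (starRingEnd ℂ z) ^ b ∂steinhausMeasure = if a = b then 1 else 0 := by
  have hme : Measurable (fun θ : ℝ => Complex.exp (Complex.I * θ)) := by fun_prop
  have hg : Measurable (fun z : ℂ => z ^ a * (starRingEnd ℂ z) ^ b) :=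
    (measurable_id.pow_const a).mul (Complex.continuous_conj.measurable.pow_const b)
  rw [steinhausMeasure, integral_map hme.aemeasurable hg.aestronglyMeasurable,
    integral_smul_measure]
  have h2pi : (0:ℝ) < 2 * Real.pi := by positivity
  have htr : ((ENNReal.ofReal (2 * Real.pi))⁻¹).toReal = (2 * Real.pi)⁻¹ := by
    rw [ENNReal.toReal_inv, ENNReal.toReal_ofReal h2pi.le]
  rw [htr]
  have hint : ∀ θ : ℝ, Complex.exp (Complex.I * θ) ^ a
      * (starRingEnd ℂ (Complex.exp (Complex.I * θ))) ^ b
      = Complex.exp ((((a:ℂ) - b) * Complex.I) * θ) := by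
    intro θ
    rw [← Complex.exp_conj, map_mul, Complex.conj_I, Complex.conj_ofReal,
      ← Complex.exp_nat_mul, ← Complex.exp_nat_mul, ← Complex.exp_add]
    ring_nf
  simp only [hint]
  rcases eq_or_ne a b with h | h
  · subst h
    simp only [sub_self, zero_mul, Complex.exp_zero, if_pos rfl]
    rw [setIntegral_const, Real.volume_real_Ioc, sub_zero, max_eq_left h2pi.le]
    simp [ENNReal.toReal_ofReal h2pi.le, smul_smul, inv_mul_cancel₀ h2pi.ne']
    field_simp [Complex.ofReal_ne_zero.mpr Real.pi_ne_zero]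
  · have hc : ((a:ℂ) - b) * Complex.I ≠ 0 :=
      mul_ne_zero (sub_ne_zero.mpr (by exact_mod_cast h)) Complex.I_ne_zero
    rw [if_neg h, ← intervalIntegral.integral_of_le h2pi.le,
      integral_exp_mul_complex hc]
    have h1 : Complex.exp (((a:ℂ) - b) * Complex.I * ((2 * Real.pi : ℝ) : ℂ)) = 1 := by
      have h2 := Complex.exp_int_mul_two_pi_mul_I ((a:ℤ) - b)
      rw [← h2]
      push_cast
      ring_nf
    rw [h1]
    norm_num

/-! ### Auxiliary lemmas: multiplicative structure -/

section Aux

variable {Ω : Type*} [MeasurableSpace Ω] {μ : Measure Ω} {f : Ω → ℕ → ℂ}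

theorem SFMSI.f_list_prod (hf : IsSteinhausRMF μ f) (ω : Ω) :
    ∀ l : List ℕ, (∀ p ∈ l, 0 < p) → f ω l.prod = (l.map (f ω)).prod := by
  intro l
  induction l with
  | nil => intro _; simpa using hf.map_one ω
  | cons p l ih =>
    intro hl
    have hp : 0 < p := hl p List.mem_cons_self
    have hl' : ∀ q ∈ l, 0 < q := fun q hq => hl q (List.mem_cons_of_mem p hq)
    have hlp : 0 < l.prod := List.prod_pos hl'
    rw [List.prod_cons, hf.map_mul ω p l.prod hp hlp, List.map_cons, List.prod_cons, ih hl']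

theorem SFMSI.f_eq_prod (hf : IsSteinhausRMF μ f) (ω : Ω) {n : ℕ} (hn : 0 < n)
    {s : Finset ℕ} (hs : n.primeFactors ⊆ s) :
    f ω n = ∏ p ∈ s, f ω p ^ n.factorization p := by
  have h1 : f ω n = ∏ p ∈ n.primeFactors, f ω p ^ n.factorization p := by
    conv_lhs => rw [← Nat.prod_primeFactorsList hn.ne']
    rw [SFMSI.f_list_prod hf ω _ (fun p hp => (Nat.prime_of_mem_primeFactorsList hp).pos),
      Finset.prod_list_map_count]
    refine Finset.prod_congr rfl fun p _ => ?_
    rw [Nat.primeFactorsList_count_eq]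
  rw [h1]
  refine Finset.prod_subset hs ?_
  intro p _ hp
  rw [← Nat.support_factorization] at hp
  simp [Finsupp.notMem_support_iff.mp hp]

theorem SFMSI.norm_f (hf : IsSteinhausRMF μ f) (ω : Ω) {n : ℕ} (hn : 0 < n) :
    ‖f ω n‖ = 1 := by
  conv_lhs => rw [← Nat.prod_primeFactorsList hn.ne',
    SFMSI.f_list_prod hf ω _ (fun p hp => (Nat.prime_of_mem_primeFactorsList hp).pos)]
  rw [List.norm_prod, List.map_map]
  apply List.prod_eq_one
  intro x hx
  obtain ⟨p, hp, rfl⟩ := List.mem_map.mp hx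
  exact hf.norm_prime ω p (Nat.prime_of_mem_primeFactorsList hp)

/-! ### Auxiliary lemmas: independence and the key orthogonality relation -/

theorem SFMSI.indepFun_integral_mul_complex [IsProbabilityMeasure μ] {X Y : Ω → ℂ}
    (h : IndepFun X Y μ) (hX : Measurable X) (hY : Measurable Y) :
    ∫ ω, X ω * Y ω ∂μ = (∫ ω, X ω ∂μ) * ∫ ω, Y ω ∂μ := by
  have hmap := (indepFun_iff_map_prod_eq_prod_map_map hX.aemeasurable hY.aemeasurable).mp h
  have hpm : Measurable (fun ω => (X ω, Y ω)) := hX.prodMk hY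
  have h1 : ∫ ω, X ω * Y ω ∂μ = ∫ p : ℂ × ℂ, p.1 * p.2 ∂(μ.map (fun ω => (X ω, Y ω))) := by
    rw [integral_map (f := fun p : ℂ × ℂ => p.1 * p.2) hpm.aemeasurable
      (measurable_fst.mul measurable_snd).aestronglyMeasurable]
  have hPX : IsProbabilityMeasure (μ.map X) := Measure.isProbabilityMeasure_map hX.aemeasurable
  have hPY : IsProbabilityMeasure (μ.map Y) := Measure.isProbabilityMeasure_map hY.aemeasurable
  rw [h1, hmap, integral_prod_mul (fun z : ℂ => z) (fun z : ℂ => z),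
    integral_map (f := fun z : ℂ => z) hX.aemeasurable aestronglyMeasurable_id,
    integral_map (f := fun z : ℂ => z) hY.aemeasurable aestronglyMeasurable_id]

theorem SFMSI.integral_prod_indep [IsProbabilityMeasure μ] (hf : IsSteinhausRMF μ f)
    (g : {q : ℕ // q.Prime} → ℂ → ℂ) (hgm : ∀ p, Measurable (g p))
    (s : Finset {q : ℕ // q.Prime}) :
    ∫ ω, ∏ p ∈ s, g p (f ω p.1) ∂μ = ∏ p ∈ s, ∫ ω, g p (f ω p.1) ∂μ := by
  induction s using Finset.induction with
  | empty => simp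
  | @insert p s hps ih =>
    have hG : iIndepFun (fun q ω => g q (f ω q.1)) μ :=
      hf.indep.comp g hgm
    have hGm : ∀ q : {q : ℕ // q.Prime}, Measurable (fun ω => g q (f ω q.1)) :=
      fun q => (hgm q).comp (hf.meas q.1)
    have hind : IndepFun (fun ω => ∏ q ∈ s, g q (f ω q.1)) (fun ω => g p (f ω p.1)) μ := by
      have h := hG.indepFun_finsetProd_of_notMem hGm hps
      rwa [show (∏ j ∈ s, fun ω => g j (f ω j.1)) = fun ω => ∏ j ∈ s, g j (f ω j.1)
        from funext fun ω => Finset.prod_apply ω s _] at h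
    rw [Finset.prod_insert hps]
    simp_rw [Finset.prod_insert hps]
    rw [show ∫ ω, g p (f ω p.1) * ∏ q ∈ s, g q (f ω q.1) ∂μ
        = ∫ ω, (fun ω => ∏ q ∈ s, g q (f ω q.1)) ω * (fun ω => g p (f ω p.1)) ω ∂μ
      from by congr 1; funext ω; ring]
    rw [SFMSI.indepFun_integral_mul_complex hind
      (Finset.measurable_prod s fun q _ => hGm q) (hGm p), ih]
    ring

theorem SFMSI.integral_f_mul_conj [IsProbabilityMeasure μ] (hf : IsSteinhausRMF μ f)
    {m n : ℕ} (hm : 0 < m) (hn : 0 < n) :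
    ∫ ω, f ω m * (starRingEnd ℂ) (f ω n) ∂μ = if m = n then 1 else 0 := by
  classical
  set s : Finset ℕ := (m * n).primeFactors with hs_def
  have hmn0 : m * n ≠ 0 := Nat.mul_ne_zero hm.ne' hn.ne'
  have hsm : m.primeFactors ⊆ s := Nat.primeFactors_mono (dvd_mul_right m n) hmn0
  have hsn : n.primeFactors ⊆ s := Nat.primeFactors_mono (dvd_mul_left n m) hmn0
  have hsprime : ∀ p ∈ s, p.Prime := fun p hp => Nat.prime_of_mem_primeFactors hp
  have key : ∀ ω, f ω m * (starRingEnd ℂ) (f ω n)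
      = ∏ p ∈ s, (f ω p ^ m.factorization p
          * (starRingEnd ℂ (f ω p)) ^ n.factorization p) := by
    intro ω
    rw [SFMSI.f_eq_prod hf ω hm hsm, SFMSI.f_eq_prod hf ω hn hsn, map_prod,
      ← Finset.prod_mul_distrib]
    exact Finset.prod_congr rfl fun p _ => by rw [map_pow]
  let e : {x // x ∈ s} ↪ {q : ℕ // q.Prime} :=
    ⟨fun x => ⟨x.1, hsprime x.1 x.2⟩, fun x y h => Subtype.ext (Subtype.mk_eq_mk.mp h)⟩
  let s' : Finset {q : ℕ // q.Prime} := s.attach.map e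
  let G : {q : ℕ // q.Prime} → ℂ → ℂ :=
    fun q z => z ^ m.factorization q.1 * (starRingEnd ℂ z) ^ n.factorization q.1
  have hGm : ∀ q, Measurable (G q) := fun q =>
    (measurable_id.pow_const _).mul (Complex.continuous_conj.measurable.pow_const _)
  have hconv : ∀ (F : ℕ → ℂ), ∏ q ∈ s', F q.1 = ∏ p ∈ s, F p := by
    intro F
    rw [Finset.prod_map]
    exact Finset.prod_attach s F
  have key2 : ∀ ω, f ω m * (starRingEnd ℂ) (f ω n) = ∏ q ∈ s', G q (f ω q.1) := by
    intro ω
    rw [key ω, ← hconv (fun p => f ω p ^ m.factorization p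
      * (starRingEnd ℂ (f ω p)) ^ n.factorization p)]
  have hint : ∀ q : {q : ℕ // q.Prime},
      ∫ ω, G q (f ω q.1) ∂μ = if m.factorization q.1 = n.factorization q.1 then 1 else 0 := by
    intro q
    rw [show ∫ ω, G q (f ω q.1) ∂μ
        = ∫ z, z ^ m.factorization q.1 * (starRingEnd ℂ z) ^ n.factorization q.1
            ∂(Measure.map (fun ω => f ω q.1) μ) from
      (integral_map (hf.meas q.1).aemeasurable (hGm q).aestronglyMeasurable).symm,
      hf.unif q.1 q.2, SFMSI.steinhaus_integral]
  simp_rw [key2]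
  rw [SFMSI.integral_prod_indep hf G hGm s']
  simp_rw [hint]
  rcases eq_or_ne m n with h | h
  · subst h
    simp
  · rw [if_neg h]
    have hne : ∃ p, m.factorization p ≠ n.factorization p := by
      by_contra hc
      push_neg at hc
      exact h (Nat.eq_of_factorization_eq hm.ne' hn.ne' hc)
    obtain ⟨p, hp⟩ := hne
    have hpp : p.Prime := by
      by_contra hpp
      rw [Nat.factorization_eq_zero_of_not_prime m hpp,
        Nat.factorization_eq_zero_of_not_prime n hpp] at hp
      exact hp rfl
    have hps : p ∈ s := by
      rcases Nat.eq_zero_or_pos (m.factorization p) with h0 | h0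
      · have : n.factorization p ≠ 0 := by rw [h0] at hp; exact fun hh => hp hh.symm
        exact hsn (by rw [← Nat.support_factorization]; exact Finsupp.mem_support_iff.mpr this)
      · exact hsm (by rw [← Nat.support_factorization]; exact Finsupp.mem_support_iff.mpr h0.ne')
    have hq : (⟨p, hpp⟩ : {q : ℕ // q.Prime}) ∈ s' := by
      simp only [s', Finset.mem_map]
      exact ⟨⟨p, hps⟩, Finset.mem_attach _ _, rfl⟩
    exact Finset.prod_eq_zero hq (by rw [if_neg hp])

/-! ### The fourth moment as a count of multiplicative quadruples -/

theorem SFMSI.fourth_moment_eq_card [IsProbabilityMeasure μ] (hf : IsSteinhausRMF μ f)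
    (U V : ℕ) :
    ∫ ω, ‖∑ n ∈ Finset.Ioc U V, f ω n‖ ^ 4 ∂μ =
      (((((Finset.Ioc U V) ×ˢ (Finset.Ioc U V)) ×ˢ ((Finset.Ioc U V) ×ˢ (Finset.Ioc U V))).filter
        fun q => q.1.1 * q.1.2 = q.2.1 * q.2.2).card : ℝ) := by
  classical
  set I := Finset.Ioc U V with hI
  have hpos : ∀ n ∈ I, 0 < n := fun n hn => lt_of_le_of_lt (Nat.zero_le U) (Finset.mem_Ioc.mp hn).1
  set S : Ω → ℂ := fun ω => ∑ n ∈ I, f ω n with hS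
  have hz : ∀ ω, S ω * S ω = ∑ x ∈ I ×ˢ I, f ω (x.1 * x.2) := by
    intro ω
    rw [hS, Finset.sum_mul_sum, Finset.sum_product]
    exact Finset.sum_congr rfl fun a ha => Finset.sum_congr rfl fun b hb =>
      (hf.map_mul ω a b (hpos a ha) (hpos b hb)).symm
  have hexp : ∀ ω, ((‖S ω‖ ^ 4 : ℝ) : ℂ)
      = ∑ q ∈ (I ×ˢ I) ×ˢ (I ×ˢ I),
          f ω (q.1.1 * q.1.2) * (starRingEnd ℂ) (f ω (q.2.1 * q.2.2)) := by
    intro ω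
    have h1 : ((‖S ω‖ ^ 4 : ℝ) : ℂ) = (S ω * S ω) * (starRingEnd ℂ) (S ω * S ω) := by
      rw [Complex.mul_conj]
      norm_cast
      rw [Complex.normSq_eq_norm_sq, norm_mul]
      ring
    rw [h1, hz, map_sum, Finset.sum_mul_sum]
    exact (Finset.sum_product (I ×ˢ I) (I ×ˢ I)
      (fun q => f ω (q.1.1 * q.1.2) * (starRingEnd ℂ) (f ω (q.2.1 * q.2.2)))).symm
  have hIntegrable : ∀ q ∈ (I ×ˢ I) ×ˢ (I ×ˢ I),
      Integrable (fun ω => f ω (q.1.1 * q.1.2) * (starRingEnd ℂ) (f ω (q.2.1 * q.2.2))) μ := by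
    intro q hq
    obtain ⟨hq1, hq2⟩ := Finset.mem_product.mp hq
    obtain ⟨h11, h12⟩ := Finset.mem_product.mp hq1
    obtain ⟨h21, h22⟩ := Finset.mem_product.mp hq2
    have hmeas : Measurable (fun ω => f ω (q.1.1 * q.1.2)
        * (starRingEnd ℂ) (f ω (q.2.1 * q.2.2))) :=
      (hf.meas _).mul (Complex.continuous_conj.measurable.comp (hf.meas _))
    refine Integrable.mono' (integrable_const (1:ℝ)) hmeas.aestronglyMeasurable ?_
    filter_upwards with ω
    rw [norm_mul, RCLike.norm_conj,
      SFMSI.norm_f hf ω (Nat.mul_pos (hpos _ h11) (hpos _ h12)),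
      SFMSI.norm_f hf ω (Nat.mul_pos (hpos _ h21) (hpos _ h22))]
    norm_num
  have hC : ((∫ ω, ‖S ω‖ ^ 4 ∂μ : ℝ) : ℂ)
      = ((((I ×ˢ I) ×ˢ (I ×ˢ I)).filter fun q => q.1.1 * q.1.2 = q.2.1 * q.2.2).card : ℂ) := by
    have h3 : ∫ ω, ((‖S ω‖ ^ 4 : ℝ) : ℂ) ∂μ = ((∫ ω, ‖S ω‖ ^ 4 ∂μ : ℝ) : ℂ) :=
      integral_ofReal
    rw [← h3,
      show (fun ω => ((‖S ω‖ ^ 4 : ℝ) : ℂ)) = fun ω => ∑ q ∈ (I ×ˢ I) ×ˢ (I ×ˢ I),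
        f ω (q.1.1 * q.1.2) * (starRingEnd ℂ) (f ω (q.2.1 * q.2.2)) from funext hexp,
      integral_finset_sum _ hIntegrable]
    have : ∀ q ∈ (I ×ˢ I) ×ˢ (I ×ˢ I),
        ∫ ω, f ω (q.1.1 * q.1.2) * (starRingEnd ℂ) (f ω (q.2.1 * q.2.2)) ∂μ
        = if q.1.1 * q.1.2 = q.2.1 * q.2.2 then (1:ℂ) else 0 := by
      intro q hq
      obtain ⟨hq1, hq2⟩ := Finset.mem_product.mp hq
      obtain ⟨h11, h12⟩ := Finset.mem_product.mp hq1
      obtain ⟨h21, h22⟩ := Finset.mem_product.mp hq2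
      exact SFMSI.integral_f_mul_conj hf (Nat.mul_pos (hpos _ h11) (hpos _ h12))
        (Nat.mul_pos (hpos _ h21) (hpos _ h22))
    rw [Finset.sum_congr rfl this, Finset.sum_boole]
  exact_mod_cast hC

end Aux

/-! ### Counting multiplicative quadruples in short intervals -/

/-- The gcd-parametrization map for quadruples. -/
def SFMSIphiQ (q : (ℕ × ℕ) × (ℕ × ℕ)) : (ℕ × ℕ) × (ℕ × ℕ) :=
  ((Nat.gcd q.1.1 q.2.1, q.1.2 / (q.2.1 / Nat.gcd q.1.1 q.2.1)),
    (q.1.1 / Nat.gcd q.1.1 q.2.1, q.2.1 / Nat.gcd q.1.1 q.2.1))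

lemma SFMSI.aux_le_sub {g x y U V : ℕ} (hx : g * x ∈ Finset.Ioc U V)
    (hy : g * y ∈ Finset.Ioc U V) (hxy : x ≠ y) : g ≤ V - U := by
  obtain ⟨hx1, hx2⟩ := Finset.mem_Ioc.mp hx
  obtain ⟨hy1, hy2⟩ := Finset.mem_Ioc.mp hy
  rcases Nat.lt_or_ge x y with h | h
  · calc g = g * 1 := (Nat.mul_one g).symm
    _ ≤ g * (y - x) := Nat.mul_le_mul_left g (by omega)
    _ = g * y - g * x := (Nat.mul_sub g y x)
    _ ≤ V - U := by omega
  · have h' : y < x := by omega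
    calc g = g * 1 := (Nat.mul_one g).symm
    _ ≤ g * (x - y) := Nat.mul_le_mul_left g (by omega)
    _ = g * x - g * y := (Nat.mul_sub g x y)
    _ ≤ V - U := by omega

lemma SFMSI.phiQ_spec {U V : ℕ} {q : (ℕ × ℕ) × (ℕ × ℕ)}
    (hq11 : q.1.1 ∈ Finset.Ioc U V) (hq12 : q.1.2 ∈ Finset.Ioc U V)
    (hq21 : q.2.1 ∈ Finset.Ioc U V) (hq22 : q.2.2 ∈ Finset.Ioc U V)
    (hab : q.1.1 * q.1.2 = q.2.1 * q.2.2) (hne : q.1.1 ≠ q.2.1) :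
    ((SFMSIphiQ q).1.1 ∈ Finset.Icc 1 (V - U) ∧ (SFMSIphiQ q).1.2 ∈ Finset.Icc 1 (V - U) ∧
      (SFMSIphiQ q).2.1 ∈ Finset.Ioc 0 V ∧ (SFMSIphiQ q).2.2 ∈ Finset.Ioc 0 V ∧
      (SFMSIphiQ q).1.1 * (SFMSIphiQ q).2.1 ∈ Finset.Ioc U V ∧
      (SFMSIphiQ q).1.2 * (SFMSIphiQ q).2.1 ∈ Finset.Ioc U V ∧
      (SFMSIphiQ q).1.1 * (SFMSIphiQ q).2.2 ∈ Finset.Ioc U V ∧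
      (SFMSIphiQ q).1.2 * (SFMSIphiQ q).2.2 ∈ Finset.Ioc U V) ∧
    q = (((SFMSIphiQ q).1.1 * (SFMSIphiQ q).2.1, (SFMSIphiQ q).1.2 * (SFMSIphiQ q).2.2),
          ((SFMSIphiQ q).1.1 * (SFMSIphiQ q).2.2, (SFMSIphiQ q).1.2 * (SFMSIphiQ q).2.1)) := by
  obtain ⟨⟨a, b⟩, ⟨c, d⟩⟩ := q
  simp only at hq11 hq12 hq21 hq22 hab hne ⊢
  have ha0 : 0 < a := lt_of_le_of_lt (Nat.zero_le U) (Finset.mem_Ioc.mp hq11).1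
  have hb0 : 0 < b := lt_of_le_of_lt (Nat.zero_le U) (Finset.mem_Ioc.mp hq12).1
  have hc0 : 0 < c := lt_of_le_of_lt (Nat.zero_le U) (Finset.mem_Ioc.mp hq21).1
  have hd0 : 0 < d := lt_of_le_of_lt (Nat.zero_le U) (Finset.mem_Ioc.mp hq22).1
  set g := Nat.gcd a c with hg_def
  have hg0 : 0 < g := Nat.gcd_pos_of_pos_left c ha0
  set r := a / g with hr_def
  set s := c / g with hs_def
  have ha_eq : g * r = a := Nat.mul_div_cancel' (Nat.gcd_dvd_left a c)
  have hc_eq : g * s = c := Nat.mul_div_cancel' (Nat.gcd_dvd_right a c)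
  have hr0 : 0 < r := by
    rcases Nat.eq_zero_or_pos r with h | h
    · rw [h, Nat.mul_zero] at ha_eq; omega
    · exact h
  have hs0 : 0 < s := by
    rcases Nat.eq_zero_or_pos s with h | h
    · rw [h, Nat.mul_zero] at hc_eq; omega
    · exact h
  have hrs_ne : r ≠ s := fun h => hne (by rw [← ha_eq, ← hc_eq, h])
  have hcop : Nat.Coprime r s := Nat.coprime_div_gcd_div_gcd hg0
  have hrbsd : r * b = s * d := by
    have : g * (r * b) = g * (s * d) := by
      rw [← Nat.mul_assoc, ← Nat.mul_assoc, ha_eq, hc_eq, hab]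
    exact Nat.eq_of_mul_eq_mul_left hg0 this
  have hsb : s ∣ b := (hcop.symm).dvd_of_dvd_mul_left ⟨d, hrbsd⟩
  set h := b / s with hh_def
  have hb_eq : s * h = b := Nat.mul_div_cancel' hsb
  have hh0 : 0 < h := by
    rcases Nat.eq_zero_or_pos h with h' | h'
    · rw [h', Nat.mul_zero] at hb_eq; omega
    · exact h'
  have hd_eq : h * r = d := by
    have : s * (h * r) = s * d := by rw [← hrbsd, ← hb_eq]; ring
    exact Nat.eq_of_mul_eq_mul_left hs0 this
  have hgr : g * r ∈ Finset.Ioc U V := by rw [ha_eq]; exact hq11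
  have hgs : g * s ∈ Finset.Ioc U V := by rw [hc_eq]; exact hq21
  have hhs : h * s ∈ Finset.Ioc U V := by rw [Nat.mul_comm, hb_eq]; exact hq12
  have hhr : h * r ∈ Finset.Ioc U V := by rw [hd_eq]; exact hq22
  have hgD : g ≤ V - U := SFMSI.aux_le_sub hgr hgs hrs_ne
  have hhD : h ≤ V - U := SFMSI.aux_le_sub hhr hhs hrs_ne
  have hrV : r ≤ V := le_trans (Nat.le_mul_of_pos_left r hg0) (Finset.mem_Ioc.mp hgr).2
  have hsV : s ≤ V := le_trans (Nat.le_mul_of_pos_left s hg0) (Finset.mem_Ioc.mp hgs).2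
  have hphi : SFMSIphiQ ((a, b), (c, d)) = ((g, h), (r, s)) := by
    simp only [SFMSIphiQ, ← hg_def, ← hr_def, ← hs_def, ← hh_def]
  rw [hphi]
  refine ⟨⟨Finset.mem_Icc.mpr ⟨hg0, hgD⟩, Finset.mem_Icc.mpr ⟨hh0, hhD⟩,
    Finset.mem_Ioc.mpr ⟨hr0, hrV⟩, Finset.mem_Ioc.mpr ⟨hs0, hsV⟩,
    hgr, hhr, hgs, hhs⟩, ?_⟩
  simp only [Prod.mk.injEq]
  refine ⟨⟨ha_eq.symm, ?_⟩, hc_eq.symm, hd_eq.symm⟩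
  rw [← hb_eq]; ring

lemma SFMSI.Bcard_le {U V g : ℕ} (hUV : U ≤ V) (hg1 : 1 ≤ g) (hgD : g ≤ V - U) {s : Finset ℕ}
    (hs : ∀ r ∈ s, g * r ∈ Finset.Ioc U V) :
    (s.card : ℝ) ≤ 2 * ((V - U : ℕ) : ℝ) / g := by
  have hg0 : 0 < g := hg1
  have hsub : s ⊆ Finset.Ioc (U / g) (V / g) := by
    intro r hr
    obtain ⟨h1, h2⟩ := Finset.mem_Ioc.mp (hs r hr)
    refine Finset.mem_Ioc.mpr ⟨?_, ?_⟩
    · exact (Nat.div_lt_iff_lt_mul hg0).mpr (by rwa [Nat.mul_comm g r] at h1)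
    · exact (Nat.le_div_iff_mul_le hg0).mpr (by rwa [Nat.mul_comm g r] at h2)
  have h1 : s.card ≤ V / g - U / g := by
    rw [← Nat.card_Ioc]; exact Finset.card_le_card hsub
  have hdd : U / g ≤ V / g := Nat.div_le_div_right hUV
  have hc1 : ((V / g - U / g : ℕ) : ℝ) = ((V / g : ℕ) : ℝ) - ((U / g : ℕ) : ℝ) :=
    Nat.cast_sub hdd
  have hc2 : ((V / g : ℕ) : ℝ) ≤ (V : ℝ) / g := Nat.cast_div_le
  have hc3 : (U : ℝ) / g - 1 ≤ ((U / g : ℕ) : ℝ) := by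
    have hn : U < g * (U / g) + g := by
      have := Nat.div_add_mod U g
      have := Nat.mod_lt U hg0
      omega
    have hr : (U : ℝ) < g * ((U / g : ℕ) : ℝ) + g := by exact_mod_cast hn
    have hgr : (0 : ℝ) < g := by exact_mod_cast hg0
    rw [sub_le_iff_le_add, div_le_iff₀ hgr]
    nlinarith
  have hDg : (1 : ℝ) ≤ ((V - U : ℕ) : ℝ) / g := by
    rw [le_div_iff₀ (by exact_mod_cast hg0 : (0:ℝ) < g), one_mul]
    exact_mod_cast hgD
  have hcast : ((V - U : ℕ) : ℝ) = (V : ℝ) - U := Nat.cast_sub hUV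
  calc (s.card : ℝ) ≤ ((V / g - U / g : ℕ) : ℝ) := by exact_mod_cast h1
    _ = ((V / g : ℕ) : ℝ) - ((U / g : ℕ) : ℝ) := hc1
    _ ≤ (V : ℝ) / g - ((U : ℝ) / g - 1) := by linarith
    _ = ((V : ℝ) - U) / g + 1 := by ring
    _ = ((V - U : ℕ) : ℝ) / g + 1 := by rw [hcast]
    _ ≤ ((V - U : ℕ) : ℝ) / g + ((V - U : ℕ) : ℝ) / g := by linarith
    _ = 2 * ((V - U : ℕ) : ℝ) / g := by ring

theorem SFMSI.card_quadruples_le (U V : ℕ) (hUV : U ≤ V) :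
    (((((Finset.Ioc U V) ×ˢ (Finset.Ioc U V)) ×ˢ ((Finset.Ioc U V) ×ˢ (Finset.Ioc U V))).filter
      fun q => q.1.1 * q.1.2 = q.2.1 * q.2.2).card : ℝ)
    ≤ ((V - U : ℕ) : ℝ) ^ 2
      + 4 * ((V - U : ℕ) : ℝ) ^ 2 * (1 + Real.log (V - U : ℕ)) ^ 2 := by
  classical
  set I := Finset.Ioc U V with hI
  set D := V - U with hD
  set P := ((I ×ˢ I) ×ˢ (I ×ˢ I)).filter (fun q => q.1.1 * q.1.2 = q.2.1 * q.2.2) with hP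
  set GH := Finset.Icc 1 D ×ˢ Finset.Icc 1 D with hGH
  set RS := Finset.Ioc 0 V ×ˢ Finset.Ioc 0 V with hRS
  set T := (GH ×ˢ RS).filter
    (fun t => (t.1.1 * t.2.1 ∈ I ∧ t.1.2 * t.2.1 ∈ I) ∧
      (t.1.1 * t.2.2 ∈ I ∧ t.1.2 * t.2.2 ∈ I)) with hT_def
  have hsplit : P.card = (P.filter (fun q => q.1.1 = q.2.1)).card
      + (P.filter (fun q => ¬ q.1.1 = q.2.1)).card :=
    (Finset.card_filter_add_card_filter_not (s := P) (fun q => q.1.1 = q.2.1)).symm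
  have hdiag : (P.filter (fun q => q.1.1 = q.2.1)).card ≤ D ^ 2 := by
    have hle : (P.filter (fun q => q.1.1 = q.2.1)).card ≤ (I ×ˢ I).card := by
      apply Finset.card_le_card_of_injOn (fun q => q.1)
      · intro q hq
        have hq1 := (Finset.mem_filter.mp (Finset.mem_filter.mp hq).1).1
        exact (Finset.mem_product.mp hq1).1
      · intro q hq q' hq' heq
        have h1 := Finset.mem_filter.mp hq
        have h2 := Finset.mem_filter.mp h1.1
        have h3 := Finset.mem_filter.mp hq'
        have h4 := Finset.mem_filter.mp h3.1
        have hmem := Finset.mem_product.mp h2.1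
        have hmem' := Finset.mem_product.mp h4.1
        have ha0 : 0 < q.1.1 :=
          lt_of_le_of_lt (Nat.zero_le U)
            (Finset.mem_Ioc.mp (Finset.mem_product.mp hmem.1).1).1
        have ha0' : 0 < q'.1.1 :=
          lt_of_le_of_lt (Nat.zero_le U)
            (Finset.mem_Ioc.mp (Finset.mem_product.mp hmem'.1).1).1
        have hq2 : q.2 = q.1 := by
          have hd : q.2.2 = q.1.2 := by
            have := h2.2
            rw [← h1.2] at this
            exact (Nat.eq_of_mul_eq_mul_left ha0 this).symm
          exact Prod.ext h1.2.symm hd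
        have hq2' : q'.2 = q'.1 := by
          have hd : q'.2.2 = q'.1.2 := by
            have := h4.2
            rw [← h3.2] at this
            exact (Nat.eq_of_mul_eq_mul_left ha0' this).symm
          exact Prod.ext h3.2.symm hd
        have heq' : q.1 = q'.1 := heq
        exact Prod.ext heq' (by rw [hq2, hq2', heq'])
    calc (P.filter (fun q => q.1.1 = q.2.1)).card ≤ (I ×ˢ I).card := hle
      _ = D * D := by rw [Finset.card_product, hI, Nat.card_Ioc, hD]
      _ = D ^ 2 := (sq D).symm
  have hoff : (P.filter (fun q => ¬ q.1.1 = q.2.1)).card ≤ T.card := by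
    apply Finset.card_le_card_of_injOn SFMSIphiQ
    · intro q hq
      have h1 := Finset.mem_filter.mp hq
      have h2 := Finset.mem_filter.mp h1.1
      have hmem := Finset.mem_product.mp h2.1
      have hm1 := Finset.mem_product.mp hmem.1
      have hm2 := Finset.mem_product.mp hmem.2
      obtain ⟨⟨hg, hh, hr, hs, m1, m2, m3, m4⟩, _⟩ :=
        SFMSI.phiQ_spec hm1.1 hm1.2 hm2.1 hm2.2 h2.2 h1.2
      exact Finset.mem_filter.mpr ⟨Finset.mem_product.mpr
        ⟨Finset.mem_product.mpr ⟨hg, hh⟩, Finset.mem_product.mpr ⟨hr, hs⟩⟩,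
        ⟨m1, m2⟩, m3, m4⟩
    · intro q hq q' hq' heq
      have h1 := Finset.mem_filter.mp hq
      have h2 := Finset.mem_filter.mp h1.1
      have hmem := Finset.mem_product.mp h2.1
      have hm1 := Finset.mem_product.mp hmem.1
      have hm2 := Finset.mem_product.mp hmem.2
      have h1' := Finset.mem_filter.mp hq'
      have h2' := Finset.mem_filter.mp h1'.1
      have hmem' := Finset.mem_product.mp h2'.1
      have hm1' := Finset.mem_product.mp hmem'.1
      have hm2' := Finset.mem_product.mp hmem'.2
      obtain ⟨_, hrec⟩ := SFMSI.phiQ_spec hm1.1 hm1.2 hm2.1 hm2.2 h2.2 h1.2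
      obtain ⟨_, hrec'⟩ := SFMSI.phiQ_spec hm1'.1 hm1'.2 hm2'.1 hm2'.2 h2'.2 h1'.2
      rw [hrec, hrec', heq]
  have hTcard : T.card = ∑ gh ∈ GH,
      (((Finset.Ioc 0 V).filter (fun r => gh.1 * r ∈ I ∧ gh.2 * r ∈ I)).card) ^ 2 := by
    rw [hT_def, Finset.card_filter, hRS, Finset.sum_product]
    refine Finset.sum_congr rfl fun gh _ => ?_
    rw [Finset.sum_product]
    have hstep : ∀ r : ℕ, (∑ s' ∈ Finset.Ioc 0 V,
        if (gh.1 * r ∈ I ∧ gh.2 * r ∈ I) ∧ (gh.1 * s' ∈ I ∧ gh.2 * s' ∈ I) then 1 else 0)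
        = (if gh.1 * r ∈ I ∧ gh.2 * r ∈ I then 1 else 0)
          * ((Finset.Ioc 0 V).filter (fun s' => gh.1 * s' ∈ I ∧ gh.2 * s' ∈ I)).card := by
      intro r
      by_cases h : gh.1 * r ∈ I ∧ gh.2 * r ∈ I
      · simp only [h, true_and, if_true, one_mul, Finset.sum_boole, Nat.cast_id]
      · simp [h]
    calc (∑ r ∈ Finset.Ioc 0 V, ∑ s' ∈ Finset.Ioc 0 V,
          if (gh.1 * r ∈ I ∧ gh.2 * r ∈ I) ∧ (gh.1 * s' ∈ I ∧ gh.2 * s' ∈ I) then 1 else 0)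
        = ∑ r ∈ Finset.Ioc 0 V, (if gh.1 * r ∈ I ∧ gh.2 * r ∈ I then 1 else 0)
          * ((Finset.Ioc 0 V).filter (fun s' => gh.1 * s' ∈ I ∧ gh.2 * s' ∈ I)).card :=
          Finset.sum_congr rfl fun r _ => hstep r
      _ = (∑ r ∈ Finset.Ioc 0 V, if gh.1 * r ∈ I ∧ gh.2 * r ∈ I then 1 else 0)
          * ((Finset.Ioc 0 V).filter (fun s' => gh.1 * s' ∈ I ∧ gh.2 * s' ∈ I)).card :=
          (Finset.sum_mul _ _ _).symm
      _ = _ := by rw [Finset.sum_boole, Nat.cast_id, sq]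
  have hHarm : ∑ g ∈ Finset.Icc 1 D, (1 : ℝ) / g ≤ 1 + Real.log D := by
    have h1 := harmonic_le_one_add_log D
    have h2 : (harmonic D : ℝ) = ∑ g ∈ Finset.Icc 1 D, (1 : ℝ) / g := by
      rw [harmonic_eq_sum_Icc]
      push_cast
      simp [one_div]
    linarith
  have hHarm_nonneg : (0:ℝ) ≤ ∑ g ∈ Finset.Icc 1 D, (1 : ℝ) / g :=
    Finset.sum_nonneg fun g _ => by positivity
  have hTreal : (T.card : ℝ) ≤ 4 * (D : ℝ) ^ 2 * (1 + Real.log D) ^ 2 := by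
    have hcast : (T.card : ℝ) = ∑ gh ∈ GH,
        ((((Finset.Ioc 0 V).filter (fun r => gh.1 * r ∈ I ∧ gh.2 * r ∈ I)).card : ℝ)) ^ 2 := by
      rw [hTcard]; push_cast; rfl
    have hBB : ∀ gh ∈ GH,
        ((((Finset.Ioc 0 V).filter (fun r => gh.1 * r ∈ I ∧ gh.2 * r ∈ I)).card : ℝ)) ^ 2
        ≤ (2 * (D:ℝ) / gh.1) * (2 * (D:ℝ) / gh.2) := by
      intro gh hgh
      obtain ⟨hg, hh⟩ := Finset.mem_product.mp hgh
      obtain ⟨hg1, hgD⟩ := Finset.mem_Icc.mp hg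
      obtain ⟨hh1, hhD⟩ := Finset.mem_Icc.mp hh
      have hB1 := SFMSI.Bcard_le hUV hg1 hgD
        (s := (Finset.Ioc 0 V).filter (fun r => gh.1 * r ∈ I ∧ gh.2 * r ∈ I))
        (fun r hr => ((Finset.mem_filter.mp hr).2).1)
      have hB2 := SFMSI.Bcard_le hUV hh1 hhD
        (s := (Finset.Ioc 0 V).filter (fun r => gh.1 * r ∈ I ∧ gh.2 * r ∈ I))
        (fun r hr => ((Finset.mem_filter.mp hr).2).2)
      rw [sq]
      exact mul_le_mul hB1 hB2 (Nat.cast_nonneg _) (by positivity)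
    calc (T.card : ℝ) = _ := hcast
      _ ≤ ∑ gh ∈ GH, (2 * (D:ℝ) / gh.1) * (2 * (D:ℝ) / gh.2) := Finset.sum_le_sum hBB
      _ = (∑ g ∈ Finset.Icc 1 D, 2 * (D:ℝ) / g) * (∑ h ∈ Finset.Icc 1 D, 2 * (D:ℝ) / h) := by
          rw [hGH, Finset.sum_product]
          exact (Finset.sum_mul_sum (Finset.Icc 1 D) (Finset.Icc 1 D)
            (fun g => 2 * (D:ℝ) / g) (fun h => 2 * (D:ℝ) / h)).symm
      _ = (2 * (D:ℝ) * ∑ g ∈ Finset.Icc 1 D, (1:ℝ) / g)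
          * (2 * (D:ℝ) * ∑ h ∈ Finset.Icc 1 D, (1:ℝ) / h) := by
          have hfac : ∑ g ∈ Finset.Icc 1 D, 2 * (D:ℝ) / g
              = 2 * (D:ℝ) * ∑ g ∈ Finset.Icc 1 D, (1:ℝ) / g := by
            rw [Finset.mul_sum]
            exact Finset.sum_congr rfl fun g _ => by ring
          rw [hfac]
      _ ≤ (2 * (D:ℝ) * (1 + Real.log D)) * (2 * (D:ℝ) * (1 + Real.log D)) := by
          have hD0 : (0:ℝ) ≤ 2 * (D:ℝ) := by positivity
          have := mul_le_mul_of_nonneg_left hHarm hD0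
          apply mul_le_mul this this (mul_nonneg hD0 hHarm_nonneg) ?_
          nlinarith [hHarm_nonneg, hD0]
      _ = 4 * (D : ℝ) ^ 2 * (1 + Real.log D) ^ 2 := by ring
  have hfinal : (P.card : ℝ) ≤ (D : ℝ) ^ 2 + (T.card : ℝ) := by
    rw [hsplit]
    push_cast
    have hd : ((P.filter (fun q => q.1.1 = q.2.1)).card : ℝ) ≤ (D:ℝ)^2 := by
      exact_mod_cast hdiag
    have ho : ((P.filter (fun q => ¬ q.1.1 = q.2.1)).card : ℝ) ≤ (T.card : ℝ) := by
      exact_mod_cast hoff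
    linarith
  calc (P.card : ℝ) ≤ (D : ℝ) ^ 2 + (T.card : ℝ) := hfinal
    _ ≤ (D : ℝ) ^ 2 + 4 * (D : ℝ) ^ 2 * (1 + Real.log D) ^ 2 := by linarith [hTreal]

/-- Fourth moment bound in short intervals: there is an absolute constant `C > 0` such that
for `3 ≤ u ≤ v ≤ 2u` with `v - u ≥ 1`,
`E|∑_{u < n ≤ v} f(n)|⁴ ≤ C v^{2/3} (v-u)^{4/3} (log v)^{52/3}`. -/
theorem steinhaus_fourth_moment_short_interval {Ω : Type*} [MeasurableSpace Ω]
    (μ : Measure Ω) [IsProbabilityMeasure μ] (f : Ω → ℕ → ℂ)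
    (hf : IsSteinhausRMF μ f) :
    ∃ C : ℝ, 0 < C ∧ ∀ u v : ℝ, 3 ≤ u → u ≤ v → v ≤ 2 * u → 1 ≤ v - u →
      ∫ ω, ‖∑ n ∈ Finset.Ioc ⌊u⌋₊ ⌊v⌋₊, f ω n‖ ^ 4 ∂μ ≤
        C * v ^ ((2 : ℝ) / 3) * (v - u) ^ ((4 : ℝ) / 3) *
          Real.log v ^ ((52 : ℝ) / 3) := by
  refine ⟨68, by norm_num, ?_⟩
  intro u v hu3 huv hv2u hH1
  set U := ⌊u⌋₊ with hU_def
  set V := ⌊v⌋₊ with hV_def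
  set H := v - u with hH_def
  set D := V - U with hD_def
  have hv3 : (3:ℝ) ≤ v := le_trans hu3 huv
  have hv0 : (0:ℝ) < v := by linarith
  have hu0 : (0:ℝ) ≤ u := by linarith
  have hUV : U ≤ V := Nat.floor_mono huv
  have hUu : (U:ℝ) ≤ u := Nat.floor_le hu0
  have huU : u < (U:ℝ) + 1 := Nat.lt_floor_add_one u
  have hVv : (V:ℝ) ≤ v := Nat.floor_le (by linarith)
  have hvV : v < (V:ℝ) + 1 := Nat.lt_floor_add_one v
  have hDcast : (D:ℝ) = (V:ℝ) - U := Nat.cast_sub hUV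
  have hD2H : (D:ℝ) ≤ 2 * H := by
    rw [hDcast]
    have : (V:ℝ) - U ≤ v - (u - 1) := by linarith
    have hH : (1:ℝ) ≤ H := hH1
    simp only [hH_def] at *
    linarith
  have hD1 : 1 ≤ D := by
    have h1 : u + 1 ≤ v := by linarith [hH1]
    have h2 : U + 1 ≤ V := by
      have : (⌊u⌋₊ : ℕ) + 1 = ⌊u + 1⌋₊ := by
        rw [Nat.floor_add_one hu0]
      rw [hU_def, hV_def]
      rw [show ⌊u⌋₊ + 1 = ⌊u + 1⌋₊ from this]
      exact Nat.floor_mono h1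
    omega
  have hDv : (D:ℝ) ≤ v := by
    rw [hDcast]
    have : (0:ℝ) ≤ U := Nat.cast_nonneg U
    linarith
  have hlogD : Real.log D ≤ Real.log v := by
    apply Real.log_le_log (by exact_mod_cast hD1) hDv
  have hlogD0 : 0 ≤ Real.log D :=
    Real.log_nonneg (by exact_mod_cast hD1)
  have hL1 : 1 ≤ Real.log v := by
    rw [Real.le_log_iff_exp_le hv0]
    have := Real.exp_one_lt_d9
    linarith
  set L := Real.log v with hL_def
  have hstep1 : ∫ ω, ‖∑ n ∈ Finset.Ioc U V, f ω n‖ ^ 4 ∂μ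
      ≤ (D:ℝ)^2 + 4 * (D:ℝ)^2 * (1 + Real.log D)^2 := by
    rw [SFMSI.fourth_moment_eq_card hf U V]
    exact SFMSI.card_quadruples_le U V hUV
  have hH0 : (0:ℝ) < H := by linarith [hH1]
  have hstep2 : (D:ℝ)^2 + 4 * (D:ℝ)^2 * (1 + Real.log D)^2 ≤ 68 * H^2 * L^2 := by
    have hA : (D:ℝ)^2 ≤ 4 * H^2 := by nlinarith [Nat.cast_nonneg (α := ℝ) D]
    have hB : (1 + Real.log D)^2 ≤ 4 * L^2 := by nlinarith
    have hC : (D:ℝ)^2 * (1 + Real.log D)^2 ≤ (4 * H^2) * (4 * L^2) :=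
      mul_le_mul hA hB (sq_nonneg _) (by positivity)
    have hL2 : (1:ℝ) ≤ L^2 := by nlinarith
    have hHL : 4 * H^2 ≤ 4 * H^2 * L^2 := by
      have := mul_le_mul_of_nonneg_left hL2 (by positivity : (0:ℝ) ≤ 4 * H^2)
      linarith
    linarith
  have hstep3 : 68 * H^2 * L^2 ≤ 68 * v ^ ((2:ℝ)/3) * H ^ ((4:ℝ)/3) * L ^ ((52:ℝ)/3) := by
    have hHv : H ≤ v := by simp only [hH_def]; linarith
    have e1 : H ^ (2:ℕ) = H ^ ((4:ℝ)/3) * H ^ ((2:ℝ)/3) := by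
      rw [← Real.rpow_natCast H 2, ← Real.rpow_add hH0]
      norm_num
    have e2 : H ^ ((2:ℝ)/3) ≤ v ^ ((2:ℝ)/3) :=
      Real.rpow_le_rpow hH0.le hHv (by norm_num)
    have e3 : L ^ (2:ℕ) ≤ L ^ ((52:ℝ)/3) := by
      rw [← Real.rpow_natCast L 2]
      exact Real.rpow_le_rpow_of_exponent_le hL1 (by norm_num)
    have p1 : (0:ℝ) < H ^ ((4:ℝ)/3) := Real.rpow_pos_of_pos hH0 _
    have p2 : (0:ℝ) < v ^ ((2:ℝ)/3) := Real.rpow_pos_of_pos hv0 _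
    have p3 : (0:ℝ) ≤ L ^ (2:ℕ) := sq_nonneg L
    calc 68 * H^2 * L^2 = 68 * (H ^ ((4:ℝ)/3) * H ^ ((2:ℝ)/3)) * L^2 := by rw [← e1]
      _ ≤ 68 * (H ^ ((4:ℝ)/3) * v ^ ((2:ℝ)/3)) * L ^ ((52:ℝ)/3) := by
          apply mul_le_mul
          · apply mul_le_mul_of_nonneg_left _ (by norm_num : (0:ℝ) ≤ 68)
            exact mul_le_mul_of_nonneg_left e2 p1.le
          · exact e3
          · exact p3
          · positivity
      _ = 68 * v ^ ((2:ℝ)/3) * H ^ ((4:ℝ)/3) * L ^ ((52:ℝ)/3) := by ring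
  calc ∫ ω, ‖∑ n ∈ Finset.Ioc U V, f ω n‖ ^ 4 ∂μ
      ≤ (D:ℝ)^2 + 4 * (D:ℝ)^2 * (1 + Real.log D)^2 := hstep1
    _ ≤ 68 * H^2 * L^2 := hstep2
    _ ≤ 68 * v ^ ((2:ℝ)/3) * H ^ ((4:ℝ)/3) * L ^ ((52:ℝ)/3) := hstep3
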